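/- arXiv:2004.14422 — 8 statements merged into one kernel-verified Lean document; each statement's English description precedes it below -/
import Mathlib

section
/- With interface closures uI = βu₁ + (1-β)u₂ and pI = μp₁ + (1-μ)p₂, where μ = (1-β)T₂/(βT₁ + (1-β)T₂), θᵢ = 1/Tᵢ, the algebraic identity Σᵢ₌₁² (pI - pᵢ)(uI - uᵢ)θᵢ ∂ₓαᵢ = 0 holds whenever ∂ₓα₁ + ∂ₓα₂ = 0. -/
/-- Interface closure identity: with uI = βu₁+(1-β)u₂, pI = μp₁+(1-μ)p₂,
μ = (1-β)T₂/(βT₁+(1-β)T₂), one has Σᵢ (pI-pᵢ)(uI-uᵢ)θᵢ aᵢ = 0 whenever a₁+a₂ = 0. -/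
theorem interface_closure_identity (u1 u2 p1 p2 T1 T2 β a1 a2 : ℝ)
    (hT1 : 0 < T1) (hT2 : 0 < T2) (hβ0 : 0 ≤ β) (hβ1 : β ≤ 1) (ha : a1 + a2 = 0) :
    let θ1 := 1 / T1
    let θ2 := 1 / T2
    let μ := (1 - β) * T2 / (β * T1 + (1 - β) * T2)
    let uI := β * u1 + (1 - β) * u2
    let pI := μ * p1 + (1 - μ) * p2
    (pI - p1) * (uI - u1) * θ1 * a1 + (pI - p2) * (uI - u2) * θ2 * a2 = 0 := by
  intro θ1 θ2 μ uI pI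
  have hD : 0 < β * T1 + (1 - β) * T2 := by
    rcases eq_or_lt_of_le hβ0 with h | h
    · nlinarith
    · nlinarith [mul_pos h hT1, mul_nonneg (sub_nonneg.2 hβ1) hT2.le]
  have ha2 : a2 = -a1 := by linarith
  subst ha2
  simp only [θ1, θ2, μ, uI, pI]
  field_simp
  ring
end

section
/- The discrete analogue of the interface closure identity holds: with uI± and pI± defined from the closures at two states u⁻, u⁺ (with saturation α₁ + α₂ = 1 in each state), the sum over phases of the arithmetic means satisfies Σᵢ₌₁² overline{(pI - pᵢ)(uI - uᵢ)θᵢ}·⟦αᵢ⟧ = 0. -/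
/-- Discrete interface closure identity: Σᵢ overline{(pI-pᵢ)(uI-uᵢ)θᵢ}·⟦αᵢ⟧ = 0
for two states (σ = false: minus, σ = true: plus) with saturation α₁+α₂ = 1. -/
theorem discrete_closure_identity
    (α u pr T θ : Bool → Fin 2 → ℝ) (β μ uI pI : Bool → ℝ)
    (hT : ∀ σ i, 0 < T σ i)
    (hθ : ∀ σ i, θ σ i = 1 / T σ i)
    (hβ0 : ∀ σ, 0 ≤ β σ) (hβ1 : ∀ σ, β σ ≤ 1)
    (hμ : ∀ σ, μ σ = (1 - β σ) * T σ 1 / (β σ * T σ 0 + (1 - β σ) * T σ 1))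
    (huI : ∀ σ, uI σ = β σ * u σ 0 + (1 - β σ) * u σ 1)
    (hpI : ∀ σ, pI σ = μ σ * pr σ 0 + (1 - μ σ) * pr σ 1)
    (hsat : ∀ σ, α σ 0 + α σ 1 = 1) :
    ∑ i : Fin 2,
      (((pI true - pr true i) * (uI true - u true i) * θ true i +
          (pI false - pr false i) * (uI false - u false i) * θ false i) / 2) *
        (α true i - α false i) = 0 := by

  have key : ∀ σ, (pI σ - pr σ 0) * (uI σ - u σ 0) * θ σ 0
      = (pI σ - pr σ 1) * (uI σ - u σ 1) * θ σ 1 := by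
    intro σ
    have hb0 := hβ0 σ
    have hb1 := hβ1 σ
    have ht0 := hT σ 0
    have ht1 := hT σ 1
    have hD : 0 < β σ * T σ 0 + (1 - β σ) * T σ 1 := by
      rcases eq_or_lt_of_le hb0 with h | h
      · rw [← h]; simpa using ht1
      · nlinarith
    have hT0 := ht0.ne'
    have hT1 := ht1.ne'
    rw [huI σ, hpI σ, hμ σ, hθ σ 0, hθ σ 1]
    field_simp
    ring
  have hj : α true 1 - α false 1 = -(α true 0 - α false 0) := by
    have := hsat true; have := hsat false; linarith
  rw [Fin.sum_univ_two, hj, key true, key false]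
  ring
end

section
/- The fluctuation fluxes d±(u⁻,u⁺) := (⟦αᵢ⟧/2)·(uI±, 0, -pI±, -pI±uI±)ᵀ satisfy the entropy contribution identity v(u⁻)·d⁻(u⁻,u⁺) + v(u⁺)·d⁺(u⁻,u⁺) = -Σᵢ₌₁² overline{pᵢuᵢθᵢ}⟦αᵢ⟧, where v is the vector of entropy variables of the Baer-Nunziato model. -/
/-- The fluctuation fluxes d±(u⁻,u⁺) = (⟦αᵢ⟧/2)(uI±, 0, -pI±, -pI±uI±)ᵀ satisfy
v(u⁻)·d⁻ + v(u⁺)·d⁺ = -Σᵢ overline{pᵢuᵢθᵢ}⟦αᵢ⟧, assuming saturation and the discrete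
interface-closure identity.  Entropy variables: v_α = p₂θ₂ - p₁θ₁, v_uᵢ = uᵢθᵢ,
v_Eᵢ = -θᵢ (the mass component of d± vanishes). -/
theorem entropy_contribution_of_d
    (α pr u θ : Bool → Fin 2 → ℝ) (uI pI : Bool → ℝ)
    (hsat : ∀ σ, α σ 0 + α σ 1 = 1)
    (hclos : ∑ i : Fin 2,
      (((pI true - pr true i) * (uI true - u true i) * θ true i +
          (pI false - pr false i) * (uI false - u false i) * θ false i) / 2) *
        (α true i - α false i) = 0) :
    ((pr false 1 * θ false 1 - pr false 0 * θ false 0) * ((α true 0 - α false 0) / 2) * uI false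
        + ∑ i : Fin 2,
            (u false i * θ false i * (-(pI false)) * ((α true i - α false i) / 2)
              + (-(θ false i)) * (-(pI false * uI false)) * ((α true i - α false i) / 2)))
      + ((pr true 1 * θ true 1 - pr true 0 * θ true 0) * ((α true 0 - α false 0) / 2) * uI true
        + ∑ i : Fin 2,
            (u true i * θ true i * (-(pI true)) * ((α true i - α false i) / 2)
              + (-(θ true i)) * (-(pI true * uI true)) * ((α true i - α false i) / 2)))
      = -(∑ i : Fin 2,
          ((pr true i * u true i * θ true i + pr false i * u false i * θ false i) / 2) *
            (α true i - α false i)) := by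
  have h : α true 1 = α false 1 - α true 0 + α false 0 := by
    have h1 := hsat true; have h2 := hsat false; linarith
  simp only [Fin.sum_univ_two] at hclos ⊢
  rw [h] at hclos ⊢
  linear_combination hclos
end

section
/- For the Baer-Nunziato model with stiffened gas EOS, the jump of f(u)·v(u) - q(u) equals Σᵢ₌₁² ⟦αᵢpᵢuᵢθᵢ⟧, where f is the physical flux, v the entropy variables, and q = -Σᵢαᵢuᵢρᵢsᵢ the entropy flux. -/
/-- For the Baer-Nunziato model with stiffened gas EOS, the jump of f(u)·v(u) - q(u)
equals Σᵢ ⟦αᵢpᵢuᵢθᵢ⟧ (σ = false: minus state, σ = true: plus state). -/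
theorem jump_flux_potential
    (γ Cv pinf : Fin 2 → ℝ) (hγ : ∀ i, 1 < γ i) (hCv : ∀ i, 0 < Cv i)
    (hpinf : ∀ i, 0 ≤ pinf i)
    (α ρ u T θ e pr s E hh : Bool → Fin 2 → ℝ)
    (hρ : ∀ σ i, 0 < ρ σ i) (hT : ∀ σ i, 0 < T σ i)
    (hθ : ∀ σ i, θ σ i = 1 / T σ i)
    (he : ∀ σ i, ρ σ i * e σ i = ρ σ i * Cv i * T σ i + pinf i)
    (hpr : ∀ σ i, pr σ i = (γ i - 1) * ρ σ i * e σ i - γ i * pinf i)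
    (hs : ∀ σ i, s σ i = -(Cv i) * (Real.log (θ σ i) + (γ i - 1) * Real.log (ρ σ i)))
    (hhh : ∀ σ i, hh σ i = e σ i + pr σ i / ρ σ i)
    (hE : ∀ σ i, E σ i = e σ i + (u σ i) ^ 2 / 2) :
    (∑ i : Fin 2,
        ((-(s true i) + (hh true i - (u true i) ^ 2 / 2) * θ true i) *
            (α true i * ρ true i * u true i)
          + (u true i * θ true i) * (α true i * (ρ true i * (u true i) ^ 2 + pr true i))
          + (-(θ true i)) * (α true i * u true i * (ρ true i * E true i + pr true i))
          + α true i * ρ true i * s true i * u true i))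
      - (∑ i : Fin 2,
        ((-(s false i) + (hh false i - (u false i) ^ 2 / 2) * θ false i) *
            (α false i * ρ false i * u false i)
          + (u false i * θ false i) * (α false i * (ρ false i * (u false i) ^ 2 + pr false i))
          + (-(θ false i)) * (α false i * u false i * (ρ false i * E false i + pr false i))
          + α false i * ρ false i * s false i * u false i))
      = ∑ i : Fin 2,
          (α true i * pr true i * u true i * θ true i
            - α false i * pr false i * u false i * θ false i) := by
  rw [← Finset.sum_sub_distrib]
  apply Finset.sum_congr rfl
  intro i _
  have key : ∀ σ : Bool,
      (-(s σ i) + (hh σ i - (u σ i) ^ 2 / 2) * θ σ i) * (α σ i * ρ σ i * u σ i)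
        + (u σ i * θ σ i) * (α σ i * (ρ σ i * (u σ i) ^ 2 + pr σ i))
        + (-(θ σ i)) * (α σ i * u σ i * (ρ σ i * E σ i + pr σ i))
        + α σ i * ρ σ i * s σ i * u σ i
      = α σ i * pr σ i * u σ i * θ σ i := by
    intro σ
    have hρ0 : ρ σ i ≠ 0 := (hρ σ i).ne'
    rw [hhh, hE]
    field_simp
    ring
  rw [key true, key false]
end

section
/- The numerical fluxes h and d± of Proposition 4.2 (the entropy conservative fluxes for the Baer-Nunziato model) satisfy the entropy conservation condition: v(u⁻)·d⁻(u⁻,u⁺) + v(u⁺)·d⁺(u⁻,u⁺) + ⟦v·f - q⟧ = h(u⁻,u⁺)·⟦v⟧ for all admissible states u±. -/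
/-- Logarithmic mean, extended by its limit on the diagonal. -/
noncomputable def logMean (a b : ℝ) : ℝ :=
  if a = b then a else (b - a) / (Real.log b - Real.log a)

lemma logMean_pos {a b : ℝ} (ha : 0 < a) (hb : 0 < b) : 0 < logMean a b := by
  unfold logMean
  split_ifs with h
  · exact ha
  · rcases lt_or_gt_of_ne h with hlt | hgt
    · exact div_pos (by linarith) (by linarith [Real.log_lt_log ha hlt])
    · exact div_pos_of_neg_of_neg (by linarith) (by linarith [Real.log_lt_log hb hgt])

lemma logMean_mul {a b : ℝ} (ha : 0 < a) (hb : 0 < b) :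
    logMean a b * (Real.log b - Real.log a) = b - a := by
  unfold logMean
  split_ifs with h
  · simp [h]
  · have hl : Real.log b - Real.log a ≠ 0 := by
      intro hl
      exact h ((by rw [← Real.exp_log ha, ← Real.exp_log hb]; rw [sub_eq_zero] at hl; rw [hl]) : a = b)
    field_simp

set_option maxHeartbeats 2000000000 in
/-- Entropy conservation condition for the numerical fluxes of Proposition 4.2:
v(u⁻)·d⁻(u⁻,u⁺) + v(u⁺)·d⁺(u⁻,u⁺) + ⟦v·f - q⟧ = h(u⁻,u⁺)·⟦v⟧,
for the Baer-Nunziato model with stiffened gas EOS and interface closures (intref_var).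
States are indexed by σ : Bool (false = minus, true = plus), phases by i : Fin 2. -/
theorem entropy_conservation_condition
    (γ Cv pinf : Fin 2 → ℝ) (hγ : ∀ i, 1 < γ i) (hCv : ∀ i, 0 < Cv i) (hpinf : ∀ i, 0 ≤ pinf i)
    (χ βs : ℝ) (hχ : χ = 0 ∨ χ = 1 / 2 ∨ χ = 1) (hβs : 0 ≤ βs)
    (α ρ u T θ e pr s hh E : Bool → Fin 2 → ℝ)
    (β μ uI pI : Bool → ℝ)
    (hαpos : ∀ σ i, 0 < α σ i) (hαlt : ∀ σ i, α σ i < 1)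
    (hsat : ∀ σ, α σ 0 + α σ 1 = 1)
    (hρ : ∀ σ i, 0 < ρ σ i) (hT : ∀ σ i, 0 < T σ i)
    (hθ : ∀ σ i, θ σ i = 1 / T σ i)
    (he : ∀ σ i, e σ i = Cv i * T σ i + pinf i / ρ σ i)
    (hpr : ∀ σ i, pr σ i = (γ i - 1) * ρ σ i * e σ i - γ i * pinf i)
    (hs : ∀ σ i, s σ i = -(Cv i) * (Real.log (θ σ i) + (γ i - 1) * Real.log (ρ σ i)))
    (hhh : ∀ σ i, hh σ i = e σ i + pr σ i / ρ σ i)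
    (hE : ∀ σ i, E σ i = e σ i + (u σ i) ^ 2 / 2)
    (hβ : ∀ σ, β σ = χ * α σ 0 * ρ σ 0 / (χ * α σ 0 * ρ σ 0 + (1 - χ) * α σ 1 * ρ σ 1))
    (hμ : ∀ σ, μ σ = (1 - β σ) * T σ 1 / (β σ * T σ 0 + (1 - β σ) * T σ 1))
    (huI : ∀ σ, uI σ = β σ * u σ 0 + (1 - β σ) * u σ 1)
    (hpI : ∀ σ, pI σ = μ σ * pr σ 0 + (1 - μ σ) * pr σ 1) :
    -- jump and mean operators
    let jmp : (Bool → ℝ) → ℝ := fun f => f true - f false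
    let avg : (Bool → ℝ) → ℝ := fun f => (f true + f false) / 2
    let ja : Fin 2 → ℝ := fun i => jmp (fun σ => α σ i)
    -- logarithmic means
    let rhat : Fin 2 → ℝ := fun i => logMean (ρ false i) (ρ true i)
    let that : Fin 2 → ℝ := fun i => logMean (θ false i) (θ true i)
    -- entropy variables
    let vρ : Bool → Fin 2 → ℝ := fun σ i => -(s σ i) + (hh σ i - (u σ i) ^ 2 / 2) * θ σ i
    let vu : Bool → Fin 2 → ℝ := fun σ i => u σ i * θ σ i
    let vE : Bool → Fin 2 → ℝ := fun σ i => -(θ σ i)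
    let vα : Bool → ℝ := fun σ => pr σ 1 * θ σ 1 - pr σ 0 * θ σ 0
    -- components of the entropy conservative numerical flux h(u⁻,u⁺)
    let hα : ℝ := -(βs * (ja 0 / 2))
    let hρf : Fin 2 → ℝ := fun i =>
      avg (fun σ => α σ i) * avg (fun σ => u σ i) * rhat i - βs * (ja i / 2) * rhat i
    let hρuf : Fin 2 → ℝ := fun i =>
      avg (fun σ => α σ i) *
          ((avg (fun σ => u σ i)) ^ 2 * rhat i
            + avg (fun σ => pr σ i * θ σ i) / avg (fun σ => θ σ i))
        - βs * (ja i / 2) * (rhat i * avg (fun σ => u σ i))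
    let hρEf : Fin 2 → ℝ := fun i =>
      avg (fun σ => α σ i) * avg (fun σ => u σ i) *
          (rhat i * (Cv i / that i + u false i * u true i / 2)
            + avg (fun σ => pr σ i * θ σ i) / avg (fun σ => θ σ i) + pinf i)
        - βs * (ja i / 2) * (rhat i * (Cv i / that i + u false i * u true i / 2) + pinf i)
    -- v(u^σ)·d^σ(u⁻,u⁺) with d^σ = (⟦αᵢ⟧/2)(uI^σ, 0, -pI^σ, -pI^σ uI^σ)
    let vdotd : Bool → ℝ := fun σ =>
      vα σ * (ja 0 / 2) * uI σ
        + ∑ i : Fin 2,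
            (vu σ i * (-(pI σ)) * (ja i / 2) + vE σ i * (-(pI σ * uI σ)) * (ja i / 2))
    -- v(u)·f(u) - q(u)
    let fv : Bool → ℝ := fun σ =>
      ∑ i : Fin 2,
        (vρ σ i * (α σ i * ρ σ i * u σ i)
          + vu σ i * (α σ i * (ρ σ i * (u σ i) ^ 2 + pr σ i))
          + vE σ i * (α σ i * u σ i * (ρ σ i * E σ i + pr σ i))
          + α σ i * ρ σ i * s σ i * u σ i)
    vdotd false + vdotd true + (fv true - fv false)
      = hα * jmp vα
        + ∑ i : Fin 2,
            (hρf i * jmp (fun σ => vρ σ i)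
              + hρuf i * jmp (fun σ => vu σ i)
              + hρEf i * jmp (fun σ => vE σ i)) := by
  intro jmp avg ja rhat that vρ vu vE vα hα' hρf hρuf hρEf vdotd fv
  -- basic positivity / nonzero facts
  have hTne : ∀ σ i, T σ i ≠ 0 := fun σ i => (hT σ i).ne'
  have hρne : ∀ σ i, ρ σ i ≠ 0 := fun σ i => (hρ σ i).ne'
  have hθpos : ∀ σ i, 0 < θ σ i := by
    intro σ i; rw [hθ]; exact one_div_pos.mpr (hT σ i)
  -- bounds on β
  have hden : ∀ σ, 0 < χ * α σ 0 * ρ σ 0 + (1 - χ) * α σ 1 * ρ σ 1 := by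
    intro σ
    rcases hχ with h | h | h <;> subst h <;>
      nlinarith [hαpos σ 0, hαpos σ 1, hρ σ 0, hρ σ 1, mul_pos (hαpos σ 0) (hρ σ 0),
        mul_pos (hαpos σ 1) (hρ σ 1)]
  have hβ0 : ∀ σ, 0 ≤ β σ := by
    intro σ
    rw [hβ]
    apply div_nonneg _ (hden σ).le
    rcases hχ with h | h | h <;> subst h <;>
      nlinarith [hαpos σ 0, hρ σ 0, mul_pos (hαpos σ 0) (hρ σ 0)]
  have hβ1 : ∀ σ, β σ ≤ 1 := by
    intro σ
    rw [hβ, div_le_one (hden σ)]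
    rcases hχ with h | h | h <;> subst h <;>
      nlinarith [hαpos σ 1, hρ σ 1, mul_pos (hαpos σ 1) (hρ σ 1)]
  have hD : ∀ σ, 0 < β σ * T σ 0 + (1 - β σ) * T σ 1 := by
    intro σ
    rcases le_total (T σ 0) (T σ 1) with h | h
    · nlinarith [mul_nonneg (sub_nonneg.mpr (hβ1 σ)) (sub_nonneg.mpr h), hT σ 0]
    · nlinarith [mul_nonneg (hβ0 σ) (sub_nonneg.mpr h), hT σ 1]
  have hDne : ∀ σ, β σ * T σ 0 + (1 - β σ) * T σ 1 ≠ 0 := fun σ => (hD σ).ne'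
  -- logMean facts
  have hRpos : ∀ i : Fin 2, 0 < logMean (ρ false i) (ρ true i) :=
    fun i => logMean_pos (hρ false i) (hρ true i)
  have hRne : ∀ i : Fin 2, logMean (ρ false i) (ρ true i) ≠ 0 := fun i => (hRpos i).ne'
  have hΘpos : ∀ i : Fin 2, 0 < logMean (θ false i) (θ true i) :=
    fun i => logMean_pos (hθpos false i) (hθpos true i)
  have hΘne : ∀ i : Fin 2, logMean (θ false i) (θ true i) ≠ 0 := fun i => (hΘpos i).ne'
  have hRlog : ∀ i : Fin 2, Real.log (ρ true i) =
      Real.log (ρ false i) + (ρ true i - ρ false i) / logMean (ρ false i) (ρ true i) := by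
    intro i
    have h := logMean_mul (hρ false i) (hρ true i)
    have hne := hRne i
    field_simp
    linear_combination h
  have hΘlog : ∀ i : Fin 2, Real.log (θ true i) =
      Real.log (θ false i) + (θ true i - θ false i) / logMean (θ false i) (θ true i) := by
    intro i
    have h := logMean_mul (hθpos false i) (hθpos true i)
    have hne := hΘne i
    field_simp
    linear_combination h
  have hα2 : ∀ σ, α σ 1 = 1 - α σ 0 := fun σ => by linarith [hsat σ]
  -- interface identity (per state)
  have hG : ∀ σ, (pr σ 1 * θ σ 1 - pr σ 0 * θ σ 0) * uI σ
      - pI σ * (u σ 0 * θ σ 0 - u σ 1 * θ σ 1)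
      + pI σ * uI σ * (θ σ 0 - θ σ 1)
      + u σ 0 * pr σ 0 * θ σ 0 - u σ 1 * pr σ 1 * θ σ 1 = 0 := by
    intro σ
    rw [hpI, hμ, huI, hθ σ 0, hθ σ 1]
    have hd := hDne σ
    have hd' : T σ 0 * β σ + T σ 1 * (1 - β σ) ≠ 0 := by
      intro h; apply hd; linarith
    have ht0 := hTne σ 0
    have ht1 := hTne σ 1
    field_simp
    ring
  -- per-phase identity
  have hPh : ∀ i : Fin 2,
      hρf i * (vρ true i - vρ false i) + hρuf i * (vu true i - vu false i)
        + hρEf i * (vE true i - vE false i)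
      = ((vρ true i * (α true i * ρ true i * u true i)
            + vu true i * (α true i * (ρ true i * (u true i) ^ 2 + pr true i))
            + vE true i * (α true i * u true i * (ρ true i * E true i + pr true i))
            + α true i * ρ true i * s true i * u true i)
          - (vρ false i * (α false i * ρ false i * u false i)
            + vu false i * (α false i * (ρ false i * (u false i) ^ 2 + pr false i))
            + vE false i * (α false i * u false i * (ρ false i * E false i + pr false i))
            + α false i * ρ false i * s false i * u false i))
        - βs * ((α true i - α false i) / 2) * (pr true i * θ true i - pr false i * θ false i)
        - ((α true i - α false i) / 2)
            * (u true i * pr true i * θ true i + u false i * pr false i * θ false i) := by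
    intro i
    simp only [hρf, hρuf, hρEf, vρ, vu, vE, jmp, avg, ja, rhat, that]
    simp only [hs]
    rw [hΘlog i, hRlog i]
    simp only [hhh, hE, he, hpr, hθ]
    have h1 := hTne true i; have h2 := hTne false i
    have h3 := hρne true i; have h4 := hρne false i
    have h5 := hRne i
    have h6 := hΘne i
    rw [hθ false i, hθ true i] at h6
    have h7 : T true i + T false i ≠ 0 := (add_pos (hT true i) (hT false i)).ne'
    have h8 : T false i + T true i ≠ 0 := (add_pos (hT false i) (hT true i)).ne'
    field_simp
    ring
  -- glue
  have e0 := hPh 0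
  have e1 := hPh 1
  have g0 := hG false
  have g1 := hG true
  simp only [vdotd, fv, hα', vα, vu, vE, jmp, avg, ja, Fin.sum_univ_two]
  simp only [vu, vE, hα2] at e0 e1
  simp only [hα2]
  linear_combination -e0 - e1 + ((α true 0 - α false 0) / 2) * g0
    + ((α true 0 - α false 0) / 2) * g1
end

section
/- For xi ranging over the conditions k22 ≥ 0, k33 ≥ 0, k44 ≥ 0, k32 = ū k22, k43 = ū k33, k42 = (Cv/θ̂ + u⁻u⁺/2)k22, the dissipation term satisfies ⟦v(u)⟧·Dν(u⁻,u⁺) = Σᵢ [k22(γᵢ-1)Cvᵢ⟦ρᵢ⟧⟦ln ρᵢ⟧ + k33 θ̄ᵢ⟦uᵢ⟧² - k44⟦Tᵢ⟧⟦θᵢ⟧] ≥ 0, i.e., the dissipation matrix of Proposition 4.4 yields a nonnegative entropy production. -/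

private lemma logMean_key (a b : ℝ) (ha : 0 < a) (hb : 0 < b) :
    (b - a) * (1 / logMean a b) = Real.log b - Real.log a := by
  by_cases h : a = b
  · simp [logMean, h]
  · have hlog : Real.log b - Real.log a ≠ 0 := by
      intro hc
      exact h (Real.log_injOn_pos (Set.mem_Ioi.2 ha) (Set.mem_Ioi.2 hb)
        (by linarith [sub_eq_zero.mp hc]))
    have hba : b - a ≠ 0 := sub_ne_zero.2 (Ne.symm h)
    rw [logMean, if_neg h]
    field_simp

private lemma jump_log_nonneg (a b : ℝ) (ha : 0 < a) (hb : 0 < b) :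
    0 ≤ (b - a) * (Real.log b - Real.log a) := by
  rcases le_total a b with h | h
  · exact mul_nonneg (by linarith) (by linarith [Real.log_le_log ha h])
  · nlinarith [mul_nonneg (sub_nonneg.2 h) (sub_nonneg.2 (Real.log_le_log hb h))]

/-- Entropy dissipation of Proposition 4.4: under the conditions k22, k33, k44 ≥ 0,
k32 = ū k22, k43 = ū k33, k42 = (Cv/θ̂ + u⁻u⁺/2)k22, the dissipation term satisfies
⟦v⟧·Dν(u⁻,u⁺) = Σᵢ [k22(γᵢ-1)Cvᵢ⟦ρᵢ⟧⟦ln ρᵢ⟧ + k33 θ̄ᵢ⟦uᵢ⟧² - k44⟦Tᵢ⟧⟦θᵢ⟧] ≥ 0. -/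
theorem dissipation_nonneg
    (γ Cv pinf : Fin 2 → ℝ) (hγ : ∀ i, 1 < γ i) (hCv : ∀ i, 0 < Cv i) (hpinf : ∀ i, 0 ≤ pinf i)
    (ρ u T θ e pr s hh : Bool → Fin 2 → ℝ)
    (hρ : ∀ σ i, 0 < ρ σ i) (hT : ∀ σ i, 0 < T σ i)
    (hθ : ∀ σ i, θ σ i = 1 / T σ i)
    (he : ∀ σ i, e σ i = Cv i * T σ i + pinf i / ρ σ i)
    (hpr : ∀ σ i, pr σ i = (γ i - 1) * ρ σ i * e σ i - γ i * pinf i)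
    (hs : ∀ σ i, s σ i = -(Cv i) * (Real.log (θ σ i) + (γ i - 1) * Real.log (ρ σ i)))
    (hhh : ∀ σ i, hh σ i = e σ i + pr σ i / ρ σ i)
    (k22 k32 k33 k42 k43 k44 : Fin 2 → ℝ)
    (hk22 : ∀ i, 0 ≤ k22 i) (hk33 : ∀ i, 0 ≤ k33 i) (hk44 : ∀ i, 0 ≤ k44 i)
    (hk32 : ∀ i, k32 i = (u true i + u false i) / 2 * k22 i)
    (hk43 : ∀ i, k43 i = (u true i + u false i) / 2 * k33 i)
    (hk42 : ∀ i, k42 i =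
      (Cv i / logMean (θ false i) (θ true i) + u false i * u true i / 2) * k22 i) :
    ((∑ i : Fin 2,
        (((-(s true i) + (hh true i - (u true i) ^ 2 / 2) * θ true i)
            - (-(s false i) + (hh false i - (u false i) ^ 2 / 2) * θ false i)) *
              (k22 i * (ρ true i - ρ false i))
          + (u true i * θ true i - u false i * θ false i) *
              (k32 i * (ρ true i - ρ false i) + k33 i * (u true i - u false i))
          + (-(θ true i) - -(θ false i)) *
              (k42 i * (ρ true i - ρ false i) + k43 i * (u true i - u false i)
                + k44 i * (T true i - T false i))))
      = ∑ i : Fin 2,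
        (k22 i * (γ i - 1) * Cv i * (ρ true i - ρ false i) *
            (Real.log (ρ true i) - Real.log (ρ false i))
          + k33 i * ((θ true i + θ false i) / 2) * (u true i - u false i) ^ 2
          - k44 i * (T true i - T false i) * (θ true i - θ false i)))
    ∧ 0 ≤ ∑ i : Fin 2,
        (k22 i * (γ i - 1) * Cv i * (ρ true i - ρ false i) *
            (Real.log (ρ true i) - Real.log (ρ false i))
          + k33 i * ((θ true i + θ false i) / 2) * (u true i - u false i) ^ 2
          - k44 i * (T true i - T false i) * (θ true i - θ false i)) := by

  have key : ∀ i : Fin 2,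
      (θ true i - θ false i) * (Cv i / logMean (θ false i) (θ true i))
        = Cv i * (Real.log (θ true i) - Real.log (θ false i)) := by
    intro i
    have h1 := logMean_key (θ false i) (θ true i)
      (by rw [hθ]; exact one_div_pos.mpr (hT _ _)) (by rw [hθ]; exact one_div_pos.mpr (hT _ _))
    calc (θ true i - θ false i) * (Cv i / logMean (θ false i) (θ true i))
        = Cv i * ((θ true i - θ false i) * (1 / logMean (θ false i) (θ true i))) := by ring
      _ = Cv i * (Real.log (θ true i) - Real.log (θ false i)) := by rw [h1]
  have hhθ : ∀ σ (i : Fin 2), hh σ i * θ σ i = γ i * Cv i := by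
    intro σ i
    have hρ' : ρ σ i ≠ 0 := ne_of_gt (hρ σ i)
    have hT' : T σ i ≠ 0 := ne_of_gt (hT σ i)
    rw [hhh, hpr, he, hθ]
    field_simp
    ring
  have hterm : ∀ i : Fin 2,
      (((-(s true i) + (hh true i - (u true i) ^ 2 / 2) * θ true i)
          - (-(s false i) + (hh false i - (u false i) ^ 2 / 2) * θ false i)) *
            (k22 i * (ρ true i - ρ false i))
        + (u true i * θ true i - u false i * θ false i) *
            (k32 i * (ρ true i - ρ false i) + k33 i * (u true i - u false i))
        + (-(θ true i) - -(θ false i)) *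
            (k42 i * (ρ true i - ρ false i) + k43 i * (u true i - u false i)
              + k44 i * (T true i - T false i)))
      = (k22 i * (γ i - 1) * Cv i * (ρ true i - ρ false i) *
            (Real.log (ρ true i) - Real.log (ρ false i))
          + k33 i * ((θ true i + θ false i) / 2) * (u true i - u false i) ^ 2
          - k44 i * (T true i - T false i) * (θ true i - θ false i)) := by
    intro i
    rw [hs, hs, hk32, hk42, hk43]
    linear_combination (k22 i * (ρ true i - ρ false i)) *
      (hhθ true i - hhθ false i - key i)
  have hnn : ∀ i : Fin 2,
      0 ≤ (k22 i * (γ i - 1) * Cv i * (ρ true i - ρ false i) *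
            (Real.log (ρ true i) - Real.log (ρ false i))
          + k33 i * ((θ true i + θ false i) / 2) * (u true i - u false i) ^ 2
          - k44 i * (T true i - T false i) * (θ true i - θ false i)) := by
    intro i
    have h1 : 0 ≤ k22 i * (γ i - 1) * Cv i * (ρ true i - ρ false i) *
        (Real.log (ρ true i) - Real.log (ρ false i)) := by
      have := jump_log_nonneg (ρ false i) (ρ true i) (hρ false i) (hρ true i)
      have hc : 0 ≤ k22 i * (γ i - 1) * Cv i :=
        mul_nonneg (mul_nonneg (hk22 i) (by linarith [hγ i])) (le_of_lt (hCv i))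
      calc (0:ℝ) ≤ (k22 i * (γ i - 1) * Cv i) *
          ((ρ true i - ρ false i) * (Real.log (ρ true i) - Real.log (ρ false i))) :=
            mul_nonneg hc this
        _ = _ := by ring
    have h2 : 0 ≤ k33 i * ((θ true i + θ false i) / 2) * (u true i - u false i) ^ 2 := by
      have hθp : ∀ σ, 0 < θ σ i := fun σ => by rw [hθ]; exact one_div_pos.mpr (hT _ _)
      have := hθp true; have := hθp false
      exact mul_nonneg (mul_nonneg (hk33 i) (by linarith)) (sq_nonneg _)
    have h3 : (T true i - T false i) * (θ true i - θ false i) ≤ 0 := by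
      rw [hθ, hθ]
      have ht := hT true i; have hf := hT false i
      have hev : (1 / T true i - 1 / T false i) * (T true i * T false i)
          = T false i - T true i := by field_simp
      nlinarith [sq_nonneg (T true i - T false i), mul_pos ht hf]
    nlinarith [mul_nonneg (hk44 i) (neg_nonneg.2 h3)]
  constructor
  · exact Finset.sum_congr rfl (fun i _ => hterm i)
  · exact Finset.sum_nonneg (fun i _ => hnn i)
end

section
/- The Gauss-Lobatto difference matrix D with entries D_{kl} = ℓ'_l(s_k), where ℓ_l are the Lagrange polynomials at the Gauss-Lobatto nodes s_0 < ... < s_p on [-1,1], satisfies the summation-by-parts property ω_k D_{kl} + ω_l D_{lk} = δ_{kp}δ_{lp} - δ_{k0}δ_{l0} for all 0 ≤ k,l ≤ p, where ω_k are the Gauss-Lobatto quadrature weights. -/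
open Polynomial Finset


/-- Summation-by-parts property of the Gauss-Lobatto difference matrix:
ω_k D_{kl} + ω_l D_{lk} = δ_{kp}δ_{lp} - δ_{k0}δ_{l0}, where D_{kl} = ℓ'_l(s_k),
for a Gauss-Lobatto rule on [-1,1] with p+1 nodes (s_0 = -1, s_p = 1), positive
weights summing to 2, exact for polynomials of degree ≤ 2p-1. -/

theorem gauss_lobatto_SBP (p : ℕ) (hp : 0 < p)
    (s ω : Fin (p + 1) → ℝ)
    (hs : StrictMono s) (h0 : s 0 = -1) (hlast : s (Fin.last p) = 1)
    (hω : ∀ k, 0 < ω k) (hsum : ∑ k, ω k = 2)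
    (hexact : ∀ f : Polynomial ℝ, f.natDegree ≤ 2 * p - 1 →
      ∑ k, ω k * f.eval (s k) = ∫ x in (-1 : ℝ)..(1 : ℝ), f.eval x)
    (D : Fin (p + 1) → Fin (p + 1) → ℝ)
    (hD : ∀ k l, D k l = (Polynomial.derivative (Lagrange.basis Finset.univ s l)).eval (s k)) :
    ∀ k l, ω k * D k l + ω l * D l k =
      (if k = Fin.last p ∧ l = Fin.last p then (1 : ℝ) else 0)
        - (if k = 0 ∧ l = 0 then (1 : ℝ) else 0) := by
  have hinj : Set.InjOn s (Finset.univ : Finset (Fin (p+1))) := fun a _ b _ h => hs.injective h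
  intro k l
  set Lk := Lagrange.basis Finset.univ s k with hLk
  set Ll := Lagrange.basis Finset.univ s l with hLl
  have hdegk : Lk.natDegree = p := by
    simpa using Lagrange.natDegree_basis hinj (Finset.mem_univ k)
  have hdegl : Ll.natDegree = p := by
    simpa using Lagrange.natDegree_basis hinj (Finset.mem_univ l)
  set f := Lk * Ll with hf
  have hdeg : (derivative f).natDegree ≤ 2 * p - 1 := by
    have h1 : f.natDegree ≤ 2 * p := by
      calc f.natDegree ≤ Lk.natDegree + Ll.natDegree := natDegree_mul_le
        _ = 2 * p := by omega
    have := natDegree_derivative_le f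
    omega
  have key := hexact (derivative f) hdeg
  -- RHS of key: fundamental theorem of calculus
  have hint : ∫ x in (-1:ℝ)..1, (derivative f).eval x = f.eval 1 - f.eval (-1) := by
    have := intervalIntegral.integral_deriv_eq_sub (f := fun x => f.eval x) (a := (-1:ℝ)) (b := 1)
      (fun x _ => f.differentiableAt) ?_
    · simpa [funext fun x => f.deriv (x := x)] using this
    · rw [funext fun x => f.deriv (x := x)]
      exact (Polynomial.continuous _).intervalIntegrable _ _
  -- evaluations of basis polynomials at nodes
  have hev : ∀ (i m : Fin (p+1)),
      (Lagrange.basis Finset.univ s i).eval (s m) = if i = m then 1 else 0 := by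
    intro i m
    by_cases h : i = m
    · subst h; simp [Lagrange.eval_basis_self hinj (Finset.mem_univ i)]
    · simp [h, Lagrange.eval_basis_of_ne h (Finset.mem_univ m)]
  -- LHS of key
  have hlhs : ∑ m, ω m * (derivative f).eval (s m) = ω l * D l k + ω k * D k l := by
    have : ∀ m : Fin (p+1), ω m * (derivative f).eval (s m) =
        (if m = l then ω m * (derivative Lk).eval (s m) else 0)
        + (if m = k then ω m * (derivative Ll).eval (s m) else 0) := by
      intro m
      rw [hf, derivative_mul, eval_add, eval_mul, eval_mul, hev, hev]
      rcases eq_or_ne m l with h1 | h1 <;> rcases eq_or_ne m k with h2 | h2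
      · subst h1; subst h2; simp; ring
      · subst h1; simp [h2, Ne.symm h2]
      · subst h2; simp [h1, Ne.symm h1]
      · simp [h1, h2, Ne.symm h1, Ne.symm h2]
    rw [Finset.sum_congr rfl fun m _ => this m, Finset.sum_add_distrib,
      Finset.sum_ite_eq' _ l, Finset.sum_ite_eq' _ k]
    simp [hD, hLk, hLl]
  -- evaluate f at endpoints
  have hf1 : f.eval 1 = if k = Fin.last p ∧ l = Fin.last p then (1:ℝ) else 0 := by
    have h : f.eval (s (Fin.last p)) =
        (if k = Fin.last p then (1:ℝ) else 0) * (if l = Fin.last p then (1:ℝ) else 0) := by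
      rw [hf, eval_mul, hev, hev]
    rw [hlast] at h
    rw [h]
    by_cases h1 : k = Fin.last p <;> by_cases h2 : l = Fin.last p <;> simp [h1, h2]
  have hfm1 : f.eval (-1) = if k = 0 ∧ l = 0 then (1:ℝ) else 0 := by
    have h : f.eval (s 0) =
        (if k = 0 then (1:ℝ) else 0) * (if l = 0 then (1:ℝ) else 0) := by
      rw [hf, eval_mul, hev, hev]
    rw [h0] at h
    rw [h]
    by_cases h1 : k = 0 <;> by_cases h2 : l = 0 <;> simp [h1, h2]
  rw [hlhs, hint, hf1, hfm1] at key
  linarith [key]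
end

section
/- A convex combination is positive: if θ_j = min((⟨m⟩ - ε)/(⟨m⟩ - m_min), 1) with 0 < ε < ⟨m⟩ and m_min < ⟨m⟩, then the limited values m̃^k = θ_j(m^k - ⟨m⟩) + ⟨m⟩ satisfy m̃^k ≥ ε for all k, where m_min = min_k m^k and ⟨m⟩ = Σ_k (ω_k/2) m^k with ω_k > 0, Σω_k = 2. -/
/-- The a posteriori limiter preserves positivity: with
θ_j = min((⟨m⟩-ε)/(⟨m⟩-m_min), 1) (θ_j = 1 if m_min ≥ ⟨m⟩), the limited values
m̃^k = θ_j(m^k - ⟨m⟩) + ⟨m⟩ satisfy m̃^k ≥ ε for all k, provided 0 < ε < ⟨m⟩. -/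
theorem limiter_positivity (p : ℕ) (ω mval : Fin (p + 1) → ℝ) (ε : ℝ)
    (hω : ∀ k, 0 < ω k) (hωsum : ∑ k, ω k = 2)
    (avg mmin θj : ℝ)
    (havg : avg = ∑ k, ω k / 2 * mval k)
    (hmin : mmin = Finset.univ.inf' Finset.univ_nonempty mval)
    (hε : 0 < ε) (hεavg : ε < avg)
    (hθ : θj = if mmin < avg then min ((avg - ε) / (avg - mmin)) 1 else 1) :
    ∀ k, ε ≤ θj * (mval k - avg) + avg := by
  intro k
  have hminle : mmin ≤ mval k := by
    rw [hmin]; exact Finset.inf'_le _ (Finset.mem_univ k)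
  by_cases hc : mmin < avg
  · rw [hθ, if_pos hc]
    set θ := min ((avg - ε) / (avg - mmin)) 1 with hθdef
    have hd : 0 < avg - mmin := by linarith
    have hθ0 : 0 ≤ θ := le_min (div_nonneg (by linarith) hd.le) one_pos.le
    have hθle : θ ≤ (avg - ε) / (avg - mmin) := min_le_left _ _
    rcases le_or_gt avg (mval k) with h | h
    · nlinarith
    · have h1 : θ * (mval k - avg) ≥ θ * (mmin - avg) := by nlinarith
      have h2 : θ * (mmin - avg) ≥ -(avg - ε) := by
        have h3 : θ * (avg - mmin) ≤ avg - ε := by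
          calc θ * (avg - mmin) ≤ (avg - ε) / (avg - mmin) * (avg - mmin) := by nlinarith
            _ = avg - ε := div_mul_cancel₀ _ hd.ne'
        nlinarith
      linarith
  · rw [hθ, if_neg hc]
    push_neg at hc
    linarith
end
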